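/- Let m_0,…,m_{p−1} be positive integers with even sum m, no m_i ≥ m/2, and suppose R ⊆ {0,…,p−1} satisfies ∑_{i∈R} m_i = m/2 with |R| ≤ p/2. Set α = 1/p, m'_i = m_i + α, m'_p = m/2, m'_{p+1} = m/2 + 1, and β = γ = 1. Then ⌈log₂ |R|⌉·α + |R|·α + ∑_{i∈R} m_i < m/2 + 1, and consequently a gather tree rooted at processor p+1 exists with completion cost exactly 2m + 2 + 2α. -/

import Mathlib

open Finset

/-- A gather tree over processors `Fin n`, written in binary-join form: `node t s` means the
root of `t` (which is also the root of the combined tree) receives, as its last communication,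
the whole data segment gathered in the subtree `s` from the root of `s`. -/
inductive GTree (n : ℕ) : Type where
  | leaf : Fin n → GTree n
  | node : GTree n → GTree n → GTree n

namespace GTree

/-- The root processor of a gather tree. -/
def root {n : ℕ} : GTree n → Fin n
  | leaf i => i
  | node t _ => t.root

/-- The set of processors spanned by a gather tree. -/
def members {n : ℕ} : GTree n → Finset (Fin n)
  | leaf i => {i}
  | node t s => t.members ∪ s.members

/-- A gather tree is valid if each processor occurs at most once in it. -/
def valid {n : ℕ} : GTree n → Prop
  | leaf _ => True
  | node t s => t.valid ∧ s.valid ∧ Disjoint t.members s.members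

/-- Total size of the data blocks gathered in a tree. -/
def size {n : ℕ} (m : Fin n → ℝ) : GTree n → ℝ
  | leaf i => m i
  | node t s => t.size m + s.size m

/-- Completion time (cost) of a gather tree under the one-ported linear cost model:
a singleton subtree accounts for the local copy `γ * m i` of its processor's own block,
and a join costs the maximum of the two subtree completion times plus the transmission
time `α + β * Size(sent subtree)`. -/
def cost {n : ℕ} (α β γ : ℝ) (m : Fin n → ℝ) : GTree n → ℝ
  | leaf i => γ * m i
  | node t s => max (t.cost α β γ m) (s.cost α β γ m) + α + β * s.size m

/-- Number of children of the root of the tree. -/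
def rootDeg {n : ℕ} : GTree n → ℕ
  | leaf _ => 0
  | node t _ => t.rootDeg + 1

end GTree

lemma size_eq_sum' {n : ℕ} (w : Fin n → ℝ) :
    ∀ t : GTree n, t.valid → t.size w = ∑ i ∈ t.members, w i
  | .leaf i, _ => by simp [GTree.size, GTree.members]
  | .node t s, ⟨ht, hs, hd⟩ => by
      rw [GTree.size, GTree.members, Finset.sum_union hd,
        size_eq_sum' w t ht, size_eq_sum' w s hs]

lemma clog2_le_self' (k : ℕ) : Nat.clog 2 k ≤ k :=
  (Nat.clog_le_iff_le_pow one_lt_two).mpr (Nat.lt_two_pow_self (n := k)).le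

lemma clog2_le_pred' (k : ℕ) : Nat.clog 2 k ≤ k - 1 := by
  cases k with
  | zero => simp [Nat.clog]
  | succ m =>
    exact (Nat.clog_le_iff_le_pow one_lt_two).mpr (by simpa using Nat.lt_two_pow_self (n := m))

lemma gather_tree_exists' {n : ℕ} (α : ℝ) (hα : 0 ≤ α) (w : Fin n → ℝ) :
    ∀ S : Finset (Fin n), S.Nonempty →
      ∃ T : GTree n, T.valid ∧ T.members = S ∧
        T.cost α 1 1 w ≤ (Nat.clog 2 S.card : ℝ) * α + ∑ i ∈ S, w i := by
  intro S
  induction S using Finset.strongInduction with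
  | _ S ih =>
    intro hS
    rcases le_or_gt S.card 1 with hk | hk
    · obtain ⟨i, rfl⟩ := Finset.card_eq_one.mp (le_antisymm hk hS.card_pos)
      exact ⟨.leaf i, trivial, rfl, by simp [GTree.cost]⟩
    · set k := S.card with hkdef
      obtain ⟨S1, hS1sub, hS1card⟩ := Finset.exists_subset_card_eq
        (show (k + 1) / 2 ≤ k by omega)
      set S2 := S \ S1 with hS2def
      have hS2card : S2.card = k - (k + 1) / 2 := by
        rw [hS2def, Finset.card_sdiff_of_subset hS1sub, hS1card]
      have hS1ne : S1.Nonempty := Finset.card_pos.mp (by omega)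
      have hS2ne : S2.Nonempty := Finset.card_pos.mp (by omega)
      have hS1ss : S1 ⊂ S := (Finset.ssubset_iff_of_subset hS1sub).mpr
        (by obtain ⟨x, hx⟩ := hS2ne
            exact ⟨x, (Finset.mem_sdiff.mp hx).1, (Finset.mem_sdiff.mp hx).2⟩)
      have hS2ss : S2 ⊂ S := Finset.sdiff_ssubset hS1sub hS1ne
      obtain ⟨T1, hv1, hm1, hc1⟩ := ih S1 hS1ss hS1ne
      obtain ⟨T2, hv2, hm2, hc2⟩ := ih S2 hS2ss hS2ne
      have hdisj : Disjoint S1 S2 := Finset.disjoint_sdiff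
      have hunion : S1 ∪ S2 = S := Finset.union_sdiff_of_subset hS1sub
      have hsum : ∑ i ∈ S1, w i + ∑ i ∈ S2, w i = ∑ i ∈ S, w i := by
        rw [← hunion, Finset.sum_union hdisj]
      have hclog : Nat.clog 2 k = Nat.clog 2 ((k + 1) / 2) + 1 := by
        rw [Nat.clog_of_two_le one_lt_two hk]; congr 2 <;> omega
      have hclog2 : (Nat.clog 2 S2.card : ℝ) ≤ (Nat.clog 2 ((k + 1) / 2) : ℝ) := by
        exact_mod_cast Nat.clog_mono_right 2 (by omega)
      have hclog1 : (Nat.clog 2 S1.card : ℝ) = (Nat.clog 2 ((k + 1) / 2) : ℝ) := by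
        rw [hS1card]
      have hclogk : (Nat.clog 2 k : ℝ) = (Nat.clog 2 ((k + 1) / 2) : ℝ) + 1 := by
        exact_mod_cast congrArg (Nat.cast : ℕ → ℝ) hclog
      set c : ℝ := (Nat.clog 2 ((k + 1) / 2) : ℝ) with hc
      have hb1 : T1.cost α 1 1 w ≤ c * α + ∑ i ∈ S1, w i := by
        rw [← hclog1]; exact hc1
      have hb2 : T2.cost α 1 1 w ≤ c * α + ∑ i ∈ S2, w i :=
        hc2.trans (by nlinarith [hclog2])
      rcases le_total (∑ i ∈ S2, w i) (∑ i ∈ S1, w i) with hle | hle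
      · refine ⟨.node T1 T2, ⟨hv1, hv2, by rw [hm1, hm2]; exact hdisj⟩,
          by rw [GTree.members, hm1, hm2, hunion], ?_⟩
        have hsz : T2.size w = ∑ i ∈ S2, w i := by rw [size_eq_sum' w T2 hv2, hm2]
        rw [GTree.cost, hsz, hclogk]
        have hmax : max (T1.cost α 1 1 w) (T2.cost α 1 1 w) ≤ c * α + ∑ i ∈ S1, w i :=
          max_le hb1 (hb2.trans (by linarith))
        nlinarith [hmax]
      · refine ⟨.node T2 T1, ⟨hv2, hv1, by rw [hm1, hm2]; exact hdisj.symm⟩,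
          by rw [GTree.members, hm1, hm2, Finset.union_comm, hunion], ?_⟩
        have hsz : T1.size w = ∑ i ∈ S1, w i := by rw [size_eq_sum' w T1 hv1, hm1]
        rw [GTree.cost, hsz, hclogk]
        have hmax : max (T2.cost α 1 1 w) (T1.cost α 1 1 w) ≤ c * α + ∑ i ∈ S2, w i :=
          max_le hb2 (hb1.trans (by linarith))
        nlinarith [hmax]

/-- The 'if' direction of the NP-hardness reduction: given a PARTITION solution `R` with
`∑_{i ∈ R} m i = M/2` and `|R| ≤ p/2`, with `α = 1/p`, `β = γ = 1`,
`m'_i = m_i + α`, `m'_p = M/2`, `m'_{p+1} = M/2 + 1`, one has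
`⌈log₂ |R|⌉ * α + |R| * α + ∑_{i ∈ R} m i < M/2 + 1`, and there is a gather tree rooted
at processor `p + 1` with completion cost exactly `2M + 2 + 2α`. -/
theorem stmt_8 (p : ℕ) (hp : 1 ≤ p) (m : Fin p → ℕ) (hpos : ∀ i, 0 < m i)
    (M : ℕ) (hM : M = ∑ i, m i) (heven : 2 ∣ M) (hsmall : ∀ i, ¬ M / 2 ≤ m i)
    (R : Finset (Fin p)) (hR : ∑ i ∈ R, m i = M / 2) (hRcard : 2 * R.card ≤ p)
    (α : ℝ) (hα : α = 1 / (p : ℝ))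
    (m' : Fin (p + 2) → ℝ)
    (hm' : ∀ i : Fin p, m' (Fin.castAdd 2 i) = (m i : ℝ) + α)
    (hmp : m' ⟨p, by omega⟩ = (M : ℝ) / 2)
    (hmp1 : m' ⟨p + 1, by omega⟩ = (M : ℝ) / 2 + 1) :
    (Nat.clog 2 R.card : ℝ) * α + (R.card : ℝ) * α + ∑ i ∈ R, (m i : ℝ) <
        (M : ℝ) / 2 + 1 ∧
    ∃ T : GTree (p + 2), T.valid ∧ T.members = Finset.univ ∧
      T.root = ⟨p + 1, by omega⟩ ∧
      T.cost α 1 1 m' = 2 * (M : ℝ) + 2 + 2 * α := by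
  obtain ⟨M2, hM2⟩ := heven
  have hMpos : 0 < M := by
    rw [hM]
    exact Finset.sum_pos (fun i _ => hpos i) ⟨⟨0, hp⟩, Finset.mem_univ _⟩
  have hM2pos : 1 ≤ M2 := by omega
  have hsmall' : ∀ i, m i + 1 ≤ M2 := by
    intro i; have := hsmall i; omega
  have hRsum : ∑ i ∈ R, m i = M2 := by rw [hR]; omega
  set r := R.card with hrdef
  -- r ≥ 2
  have hr1 : 1 ≤ r := by
    rcases Finset.eq_empty_or_nonempty R with h | h
    · exfalso; rw [h] at hRsum; simp at hRsum; omega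
    · exact h.card_pos
  have hr2 : 2 ≤ r := by
    rcases Nat.lt_or_ge r 2 with h | h
    · exfalso
      have : r = 1 := by omega
      obtain ⟨i, hi⟩ := Finset.card_eq_one.mp this
      rw [hi, Finset.sum_singleton] at hRsum
      have := hsmall' i; omega
    · exact h
  -- complement
  set Rc := Rᶜ with hRcdef
  have hRcsum : ∑ i ∈ Rc, m i = M2 := by
    have h := Finset.sum_add_sum_compl R m
    rw [← hRcdef, ← hM, hRsum] at h
    omega
  have hRccard : Rc.card = p - r := by
    rw [hRcdef, Finset.card_compl, Fintype.card_fin]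
  have hRc2 : 2 ≤ Rc.card := by omega
  obtain ⟨j, hj⟩ : Rc.Nonempty := Finset.card_pos.mp (by omega)
  set S2 := Rc.erase j with hS2def
  have hS2card : S2.card = p - r - 1 := by
    rw [hS2def, Finset.card_erase_of_mem hj, hRccard]
  have hS2ne : S2.Nonempty := Finset.card_pos.mp (by omega)
  have hS2sum : m j + ∑ i ∈ S2, m i = M2 := by
    rw [hS2def, Finset.add_sum_erase Rc m hj, hRcsum]
  -- real facts
  have hp0 : (0:ℝ) < p := by exact_mod_cast hp
  have hα0 : 0 < α := by rw [hα]; positivity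
  have hpα : (p:ℝ) * α = 1 := by rw [hα]; field_simp
  have hMr : (M:ℝ) / 2 = (M2:ℝ) := by
    have : (M:ℝ) = 2 * (M2:ℝ) := by exact_mod_cast congrArg Nat.cast hM2
    linarith
  have hRsumR : ∑ i ∈ R, (m i:ℝ) = (M2:ℝ) := by exact_mod_cast congrArg Nat.cast hRsum
  have hS2sumR : (m j:ℝ) + ∑ i ∈ S2, (m i:ℝ) = (M2:ℝ) := by
    exact_mod_cast congrArg Nat.cast hS2sum
  have hmj1 : (1:ℝ) ≤ (m j:ℝ) := by exact_mod_cast hpos j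
  have hmjM : (m j:ℝ) ≤ (M2:ℝ) - 1 := by
    have := hsmall' j
    have : ((m j + 1 : ℕ):ℝ) ≤ (M2:ℝ) := by exact_mod_cast this
    push_cast at this; linarith
  have hrcast : 2 * (r:ℝ) ≤ (p:ℝ) := by exact_mod_cast hRcard
  have hclogr : (Nat.clog 2 r : ℝ) ≤ (r:ℝ) - 1 := by
    have h1 : Nat.clog 2 r + 1 ≤ r := by have := clog2_le_pred' r; omega
    have := (Nat.cast_le (α := ℝ)).mpr h1
    push_cast at this; linarith
  have hclogk2 : (Nat.clog 2 S2.card : ℝ) ≤ (S2.card : ℝ) :=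
    by exact_mod_cast clog2_le_self' S2.card
  have hk2p : (S2.card : ℝ) ≤ (p:ℝ) - 1 := by
    have : S2.card + 1 ≤ p := by omega
    have := (Nat.cast_le (α := ℝ)).mpr this
    push_cast at this; linarith
  have hrk2p : (r:ℝ) + (S2.card:ℝ) + 1 = (p:ℝ) := by
    have : r + S2.card + 1 = p := by omega
    exact_mod_cast congrArg Nat.cast this
  -- First conjunct
  have conj1 : (Nat.clog 2 r : ℝ) * α + (r : ℝ) * α + ∑ i ∈ R, (m i : ℝ) <
      (M : ℝ) / 2 + 1 := by
    rw [hRsumR, hMr]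
    linarith [mul_le_mul_of_nonneg_right hclogr hα0.le,
      mul_le_mul_of_nonneg_right hrcast hα0.le]
  refine ⟨conj1, ?_⟩
  -- embedding
  set E : Fin p ↪ Fin (p + 2) := ⟨Fin.castAdd 2, Fin.castAdd_injective _ _⟩ with hEdef
  have hEval : ∀ i : Fin p, ((E i : Fin (p+2)) : ℕ) = (i : ℕ) := fun i => rfl
  have hEm : ∀ i : Fin p, m' (E i) = (m i : ℝ) + α := fun i => hm' i
  have hmapval : ∀ (X : Finset (Fin p)) (x : Fin (p+2)), x ∈ X.map E → (x:ℕ) < p := by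
    intro X x hx
    obtain ⟨i, _, rfl⟩ := Finset.mem_map.mp hx
    exact i.isLt
  set pp : Fin (p + 2) := ⟨p, by omega⟩ with hppdef
  set q : Fin (p + 2) := ⟨p + 1, by omega⟩ with hqdef
  have hval_q : ((q : Fin (p + 2)) : ℕ) = p + 1 := rfl
  have hval_pp : ((pp : Fin (p + 2)) : ℕ) = p := rfl
  -- subtrees
  obtain ⟨TA, vA, mA, cA⟩ := gather_tree_exists' α hα0.le m' (R.map E)
    (Finset.Nonempty.map (Finset.card_pos.mp (by omega : 0 < R.card)))
  obtain ⟨T2, v2, m2, c2⟩ := gather_tree_exists' α hα0.le m' (S2.map E)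
    (Finset.Nonempty.map hS2ne)
  have hcardA : (R.map E).card = r := by rw [Finset.card_map]
  have hcard2 : (S2.map E).card = S2.card := Finset.card_map _
  have hsumA : ∑ i ∈ R.map E, m' i = (M2:ℝ) + (r:ℝ) * α := by
    rw [Finset.sum_map,
      Finset.sum_congr rfl (fun i _ => hEm i), Finset.sum_add_distrib, hRsumR,
      Finset.sum_const, nsmul_eq_mul]
  have hsum2 : ∑ i ∈ S2.map E, m' i = ((M2:ℝ) - (m j:ℝ)) + (S2.card:ℝ) * α := by
    rw [Finset.sum_map,
      Finset.sum_congr rfl (fun i _ => hEm i), Finset.sum_add_distrib,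
      Finset.sum_const, nsmul_eq_mul]
    have : ∑ i ∈ S2, (m i:ℝ) = (M2:ℝ) - (m j:ℝ) := by linarith
    rw [this]
  have hszA : TA.size m' = (M2:ℝ) + (r:ℝ) * α := by
    rw [size_eq_sum' m' TA vA, mA, hsumA]
  have hsz2 : T2.size m' = ((M2:ℝ) - (m j:ℝ)) + (S2.card:ℝ) * α := by
    rw [size_eq_sum' m' T2 v2, m2, hsum2]
  -- cost bounds on subtrees
  have hcA : TA.cost α 1 1 m' ≤ (Nat.clog 2 r : ℝ) * α + ((M2:ℝ) + (r:ℝ) * α) := by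
    have := cA; rw [hcardA, hsumA] at this; exact this
  have hcA1 : TA.cost α 1 1 m' ≤ (M2:ℝ) + 1 := by
    refine hcA.trans ?_
    linarith [mul_le_mul_of_nonneg_right hclogr hα0.le,
      mul_le_mul_of_nonneg_right hrcast hα0.le]
  have hc2b : T2.cost α 1 1 m' ≤ (Nat.clog 2 S2.card : ℝ) * α +
      (((M2:ℝ) - (m j:ℝ)) + (S2.card:ℝ) * α) := by
    have := c2; rw [hcard2, hsum2] at this; exact this
  -- m' values
  have hmpp : m' pp = (M2:ℝ) := by rw [hppdef, ← hMr]; exact hmp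
  have hmq : m' q = (M2:ℝ) + 1 := by rw [hqdef, ← hMr]; exact hmp1
  have hmEj : m' (E j) = (m j:ℝ) + α := hEm j
  have hα1 : α ≤ 1 := by
    rw [hα, div_le_one hp0]
    exact_mod_cast hp
  have hmEjM : m' (E j) ≤ (M2:ℝ) := by rw [hmEj]; linarith
  -- key bound : cT2 ≤ M2 + α + (m j + α)
  have hc2Y : T2.cost α 1 1 m' ≤ (M2:ℝ) + α + ((m j:ℝ) + α) := by
    refine hc2b.trans ?_
    linarith [mul_le_mul_of_nonneg_right hclogk2 hα0.le,
      mul_le_mul_of_nonneg_right hk2p hα0.le]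
  -- the tree
  obtain ⟨B, hBdef⟩ : ∃ B : GTree (p + 2),
      B = .node (.node (.leaf pp) (.leaf (E j))) T2 := ⟨_, rfl⟩
  obtain ⟨T, hTdef⟩ : ∃ T : GTree (p + 2),
      T = .node (.node (.leaf q) TA) B := ⟨_, rfl⟩
  -- validity
  have hdisj_R_S2 : Disjoint R S2 := by
    rw [Finset.disjoint_right]
    intro x hx hxR
    rw [hS2def] at hx
    have hxc : x ∈ Rᶜ := by
      rw [hRcdef] at hx
      exact Finset.mem_of_mem_erase hx
    exact Finset.mem_compl.mp hxc hxR
  have hjR : j ∉ R := by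
    rw [hRcdef] at hj
    exact Finset.mem_compl.mp hj
  have hppq : pp ≠ q := by
    intro h
    have h2 := congrArg Fin.val h
    rw [hval_pp, hval_q] at h2
    omega
  have hqmapA : q ∉ R.map E := by
    intro h
    have h2 := hmapval _ _ h
    rw [hval_q] at h2
    omega
  have hqmap2 : q ∉ S2.map E := by
    intro h
    have h2 := hmapval _ _ h
    rw [hval_q] at h2
    omega
  have hppmapA : pp ∉ R.map E := by
    intro h
    have h2 := hmapval _ _ h
    rw [hval_pp] at h2
    omega
  have hppmap2 : pp ∉ S2.map E := by
    intro h
    have h2 := hmapval _ _ h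
    rw [hval_pp] at h2
    omega
  have hqEj : q ≠ E j := by
    intro h
    have h2 := congrArg Fin.val h
    rw [hEval j, hval_q] at h2
    have := j.isLt
    omega
  have hppEj : pp ≠ E j := by
    intro h
    have h2 := congrArg Fin.val h
    rw [hEval j, hval_pp] at h2
    have := j.isLt
    omega
  have hEjmapA : E j ∉ R.map E := by
    rw [Finset.mem_map']; exact hjR
  have hEjmap2 : E j ∉ S2.map E := by
    rw [Finset.mem_map', hS2def]
    exact Finset.notMem_erase j Rc
  have hmapA2 : Disjoint (R.map E) (S2.map E) :=
    (Finset.disjoint_map E).mpr hdisj_R_S2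
  have hvB : B.valid := by
    rw [hBdef]
    refine ⟨⟨trivial, trivial, ?_⟩, v2, ?_⟩
    · simp only [GTree.members]
      exact Finset.disjoint_singleton.mpr hppEj
    · simp only [GTree.members, m2]
      rw [Finset.disjoint_left]
      intro x hx hx2
      simp only [Finset.mem_union, Finset.mem_singleton] at hx
      rcases hx with h | h
      · exact hppmap2 (h ▸ hx2)
      · exact hEjmap2 (h ▸ hx2)
  have hvT : T.valid := by
    rw [hTdef]
    refine ⟨⟨trivial, vA, ?_⟩, hvB, ?_⟩
    · simp only [GTree.members, mA]
      exact Finset.disjoint_singleton_left.mpr hqmapA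
    · rw [hBdef]
      simp only [GTree.members, mA, m2]
      rw [Finset.disjoint_left]
      intro x hx hx2
      simp only [Finset.mem_union, Finset.mem_singleton] at hx hx2
      rcases hx with h | h
      · rcases hx2 with (h2 | h2) | h2
        · exact hppq (h.symm.trans h2).symm
        · exact hqEj (h.symm.trans h2)
        · exact hqmap2 (h ▸ h2)
      · rcases hx2 with (h2 | h2) | h2
        · exact hppmapA (h2 ▸ h)
        · exact hEjmapA (h2 ▸ h)
        · exact Finset.disjoint_left.mp hmapA2 h h2
  -- members = univ
  have hmemT : T.members = Finset.univ := by
    apply Finset.eq_univ_of_forall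
    intro x
    rw [hTdef, hBdef]
    simp only [GTree.members, mA, m2, Finset.mem_union, Finset.mem_singleton]
    by_cases hx : (x:ℕ) < p
    · have hxe : x = E ⟨(x:ℕ), hx⟩ := by
        apply Fin.ext; rw [hEval]
      by_cases hxR : (⟨(x:ℕ), hx⟩ : Fin p) ∈ R
      · exact Or.inl (Or.inr (hxe ▸ Finset.mem_map_of_mem E hxR))
      · have hxc : (⟨(x:ℕ), hx⟩ : Fin p) ∈ Rc := by
          rw [hRcdef]; exact Finset.mem_compl.mpr hxR
        by_cases hxj : (⟨(x:ℕ), hx⟩ : Fin p) = j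
        · refine Or.inr (Or.inl (Or.inr ?_))
          rw [hxe, hxj]
        · refine Or.inr (Or.inr ?_)
          rw [hxe]
          refine Finset.mem_map_of_mem E ?_
          rw [hS2def]
          exact Finset.mem_erase.mpr ⟨hxj, hxc⟩
    · have hx2 : (x:ℕ) = p ∨ (x:ℕ) = p + 1 := by
        have := x.isLt; omega
      rcases hx2 with h | h
      · exact Or.inr (Or.inl (Or.inl (by apply Fin.ext; simpa [hppdef] using h)))
      · exact Or.inl (Or.inl (by apply Fin.ext; simpa [hqdef] using h))
  -- root
  have hroot : T.root = (⟨p + 1, by omega⟩ : Fin (p + 2)) := by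
    rw [hTdef, hqdef]
    rfl
  -- linear relation among the products
  have hdist : (r:ℝ) * α + ((S2.card:ℝ)) * α + α = 1 := by
    rw [show (r:ℝ) * α + ((S2.card:ℝ)) * α + α = ((r:ℝ) + (S2.card:ℝ) + 1) * α from by
      ring, hrk2p, hpα]
  have hr2R : (2:ℝ) ≤ (r:ℝ) := by exact_mod_cast hr2
  have h2α : 2 * α ≤ (r:ℝ) * α :=
    mul_le_mul_of_nonneg_right hr2R hα0.le |>.trans_eq rfl
  -- cost of B
  have hcB : B.cost α 1 1 m' = 2 * (M2:ℝ) + 3 * α + (S2.card:ℝ) * α := by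
    rw [hBdef]
    simp only [GTree.cost, GTree.size, one_mul]
    rw [hsz2, hmpp, hmEj]
    rw [max_eq_left (show (m j:ℝ) + α ≤ (M2:ℝ) by linarith)]
    rw [max_eq_left (show GTree.cost α 1 1 m' T2 ≤ (M2:ℝ) + α + ((m j:ℝ) + α) by
      linarith [hc2Y])]
    ring
  have hszB : B.size m' = 2 * (M2:ℝ) + α + (S2.card:ℝ) * α := by
    rw [hBdef]
    simp only [GTree.size]
    rw [hsz2, hmpp, hmEj]
    ring
  have hcT : T.cost α 1 1 m' = 2 * (M:ℝ) + 2 + 2 * α := by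
    rw [hTdef]
    simp only [GTree.cost, GTree.size, one_mul]
    rw [hszA, hszB, hmq, hcB]
    rw [max_eq_left (show GTree.cost α 1 1 m' TA ≤ (M2:ℝ) + 1 by linarith [hcA1])]
    rw [max_eq_left (show 2 * (M2:ℝ) + 3 * α + (S2.card:ℝ) * α ≤
      (M2:ℝ) + 1 + α + ((M2:ℝ) + (r:ℝ) * α) by linarith [hdist, h2α, hα0])]
    have hMR : (M:ℝ) = 2 * (M2:ℝ) := by exact_mod_cast congrArg Nat.cast hM2
    rw [hMR]
    linarith [hdist]
  exact ⟨T, hvT, hmemT, hroot, hcT⟩
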